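/- arXiv:1411.0782 — 2 statements merged into one kernel-verified Lean document; each statement's English description precedes it below -/
import Mathlib

section
/- Let b be the branching factor of a CRN and let w, w_max be integers with (w+1)·b ≤ w_max. If the CRN has no undecomposable semiformal pathway of width strictly greater than w and at most w_max, then it has no undecomposable semiformal pathway of width strictly greater than w at all. -/
namespace CRNVerif

variable {σ : Type} [DecidableEq σ]

/-- A state is a multiset of species. -/
abbrev State (σ : Type) := Multiset σ
/-- A reaction is a pair (reactants, products) of multisets of species. -/
abbrev Reaction (σ : Type) := Multiset σ × Multiset σ
/-- A pathway is a finite sequence of reactions. -/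
abbrev Pathway (σ : Type) := List (Reaction σ)

/-- Result of applying reaction `r` in state `S` (i.e. `S ⊕ r`). -/
def applyRxn (S : State σ) (r : Reaction σ) : State σ := S - r.1 + r.2

/-- Minimal initial state of a pathway: the smallest state in which
its reactions can occur in succession. -/
def minInit : Pathway σ → State σ
  | [] => 0
  | r :: p => r.1 + (minInit p - r.2)

/-- State reached from `S` after performing all reactions of `p` in order. -/
def finalFrom (S : State σ) : Pathway σ → State σ
  | [] => S
  | r :: p => finalFrom (applyRxn S r) p

/-- The final state of a pathway (starting from its minimal initial state). -/
def finalState (p : Pathway σ) : State σ := finalFrom (minInit p) p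

/-- The state `S_i` after the first `i` reactions, starting from the minimal initial state. -/
def stateAt (p : Pathway σ) (i : ℕ) : State σ := finalFrom (minInit p) (p.take i)

/-- A state is formal if it contains only formal species (as given by `fm`). -/
def FormalState (fm : σ → Bool) (S : State σ) : Prop := ∀ x ∈ S, fm x = true

/-- `Formal(S)`: the multiset obtained by removing all intermediate species from `S`. -/
def formalPart (fm : σ → Bool) (S : State σ) : State σ := S.filter (fun x => fm x = true)

/-- A reaction is trivial if reactants equal products. -/
def TrivialRxn (r : Reaction σ) : Prop := r.1 = r.2

/-- A CRN is a (finite) set of nontrivial reactions. -/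
def NontrivialRxns (C : Finset (Reaction σ)) : Prop := ∀ r ∈ C, ¬ TrivialRxn r

/-- A formal CRN contains only formal reactions. -/
def IsFormalCRN (fm : σ → Bool) (C : Finset (Reaction σ)) : Prop :=
  ∀ r ∈ C, FormalState fm r.1 ∧ FormalState fm r.2

/-- `p` is a pathway of the CRN `C`. -/
def PathwayOf (C : Finset (Reaction σ)) (p : Pathway σ) : Prop := ∀ r ∈ p, r ∈ C

/-- `Interleave l₁ l₂ l`: `l` can be partitioned into the two (order-preserving,
not necessarily contiguous) subsequences `l₁` and `l₂`. -/
inductive Interleave {α : Type u} : List α → List α → List α → Prop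
  | nil : Interleave [] [] []
  | left {a : α} {l₁ l₂ l : List α} : Interleave l₁ l₂ l → Interleave (a :: l₁) l₂ (a :: l)
  | right {a : α} {l₁ l₂ l : List α} : Interleave l₁ l₂ l → Interleave l₁ (a :: l₂) (a :: l)

/-- `InterleaveMany qs p`: `p` is generated by interleaving the lists in `qs`. -/
inductive InterleaveMany {α : Type u} : List (List α) → List α → Prop
  | nil : InterleaveMany [] []
  | cons {q r p : List α} {qs : List (List α)} :
      Interleave q r p → InterleaveMany qs r → InterleaveMany (q :: qs) p

/-- A pathway is semiformal if its minimal initial state is formal. -/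
def Semiformal (fm : σ → Bool) (p : Pathway σ) : Prop := FormalState fm (minInit p)

/-- A formal pathway: a (nonempty) pathway whose minimal initial state and
final state are both formal. -/
def FormalPathway (fm : σ → Bool) (p : Pathway σ) : Prop :=
  p ≠ [] ∧ FormalState fm (minInit p) ∧ FormalState fm (finalState p)

/-- A formal pathway is decomposable if it can be partitioned into two nonempty
subsequences that are each formal pathways. -/
def FDecomposable (fm : σ → Bool) (p : Pathway σ) : Prop :=
  ∃ q₁ q₂, q₁ ≠ [] ∧ q₂ ≠ [] ∧ Interleave q₁ q₂ p ∧
    FormalPathway fm q₁ ∧ FormalPathway fm q₂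

/-- A prime formal pathway is a formal pathway that is not decomposable. -/
def PrimePathway (fm : σ → Bool) (p : Pathway σ) : Prop :=
  FormalPathway fm p ∧ ¬ FDecomposable fm p

/-- The formal basis: the set of (initial state, final state) pairs of prime
formal pathways of `C`. -/
def formalBasis (fm : σ → Bool) (C : Finset (Reaction σ)) : Set (Reaction σ) :=
  { r | ∃ p, PathwayOf C p ∧ PrimePathway fm p ∧ r = (minInit p, finalState p) }

/-- Two sets of reactions are equal up to addition/removal of trivial reactions. -/
def EqUpToTrivial (A B : Set (Reaction σ)) : Prop :=
  {r ∈ A | ¬ TrivialRxn r} = {r ∈ B | ¬ TrivialRxn r}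

/-- The reaction at (0-based) index `j` of `p` is a turning point:
before it only formal species of the initial state appear, from it on only formal
species of the final state appear, and at the moment the turning point fires,
no formal species are left over. -/
def TurningAt (fm : σ → Bool) (p : Pathway σ) (j : ℕ) : Prop :=
  ∃ h : j < p.length,
    (∀ i ≤ j, formalPart fm (stateAt p i) ≤ minInit p) ∧
    (∀ i, j < i → i ≤ p.length → formalPart fm (stateAt p i) ≤ finalState p) ∧
    formalPart fm (stateAt p j - (p.get ⟨j, h⟩).1) = 0

/-- A regular formal pathway: one that implements a formal reaction,
i.e. has a turning point. -/
def RegularPathway (fm : σ → Bool) (p : Pathway σ) : Prop :=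
  FormalPathway fm p ∧ ∃ j, TurningAt fm p j

/-- A CRN is regular if every prime formal pathway is regular. -/
def RegularCRN (fm : σ → Bool) (C : Finset (Reaction σ)) : Prop :=
  ∀ p, PathwayOf C p → PrimePathway fm p → RegularPathway fm p

/-- `q` is a strong closing pathway for `p` (within CRN `C`): it can occur in the
final state of `p`, consumes no formal species, and leads back to a formal state. -/
def ClosingPathway (fm : σ → Bool) (C : Finset (Reaction σ)) (p q : Pathway σ) : Prop :=
  PathwayOf C q ∧ minInit q ≤ finalState p ∧ (∀ r ∈ q, formalPart fm r.1 = 0) ∧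
  FormalState fm (finalFrom (finalState p) q)

/-- A CRN is strongly tidy if every semiformal pathway has a strong closing pathway. -/
def StronglyTidy (fm : σ → Bool) (C : Finset (Reaction σ)) : Prop :=
  ∀ p, PathwayOf C p → Semiformal fm p → ∃ q, ClosingPathway fm C p q

/-- A semiformal pathway is decomposable if it can be partitioned into two
nonempty subsequences that are each semiformal. -/
def SDecomposable (fm : σ → Bool) (p : Pathway σ) : Prop :=
  ∃ q₁ q₂, q₁ ≠ [] ∧ q₂ ≠ [] ∧ Interleave q₁ q₂ p ∧ Semiformal fm q₁ ∧ Semiformal fm q₂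

/-- The width of a pathway: the maximum size of the states it passes through. -/
def width (p : Pathway σ) : ℕ :=
  ((List.range (p.length + 1)).map (fun i => Multiset.card (stateAt p i))).foldr max 0

/-- The branching factor of a CRN. -/
def branching (C : Finset (Reaction σ)) : ℕ :=
  C.sup (fun r => max (Multiset.card r.1) (Multiset.card r.2))

/-- Formal state `T` is reachable from `S` via reactions of `C`. -/
def Reachable (C : Finset (Reaction σ)) (S T : State σ) : Prop :=
  ∃ p, PathwayOf C p ∧ minInit p ≤ S ∧ finalFrom S p = T

/-- `C` and `C'` share no intermediate species: any species occurring in both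
CRNs is formal. -/
def NoSharedIntermediates (fm : σ → Bool) (C C' : Finset (Reaction σ)) : Prop :=
  ∀ r ∈ C, ∀ r' ∈ C', ∀ x : σ, x ∈ r.1 + r.2 → x ∈ r'.1 + r'.2 → fm x = true

/-- The formal closure of a pathway: the minimal state containing the formal part
of every state along the pathway. -/
def formalClosure (fm : σ → Bool) (p : Pathway σ) : State σ :=
  ((List.range (p.length + 1)).map (fun i => formalPart fm (stateAt p i))).foldr (· ∪ ·) 0

/-- The decomposed final states of a semiformal pathway: all pairs of final
states arising from decompositions into two (nonempty) semiformal pathways. -/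
def DFS (fm : σ → Bool) (p : Pathway σ) : Set (State σ × State σ) :=
  { T | ∃ q₁ q₂, q₁ ≠ [] ∧ q₂ ≠ [] ∧ Interleave q₁ q₂ p ∧
        Semiformal fm q₁ ∧ Semiformal fm q₂ ∧ T = (finalState q₁, finalState q₂) }

/-- The minimal state containing the formal parts of all states strictly after index `j`. -/
def rfsAt (fm : σ → Bool) (p : Pathway σ) (j : ℕ) : State σ :=
  (((List.range (p.length + 1)).filter (fun i => j < i)).map
      (fun i => formalPart fm (stateAt p i))).foldr (· ∪ ·) 0

/-- The regular final states of a pathway: the minimal states `T` witnessed by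
potential turning point reactions. -/
def RFS (fm : σ → Bool) (p : Pathway σ) : Set (State σ) :=
  { T | ∃ j, ∃ h : j < p.length,
      (∀ i ≤ j, formalPart fm (stateAt p i) ≤ minInit p) ∧
      formalPart fm (stateAt p j - (p.get ⟨j, h⟩).1) = 0 ∧
      T = rfsAt fm p j }

/-- The signature of a semiformal pathway: (initial state, final state, width,
formal closure, DFS, RFS). -/
def signature (fm : σ → Bool) (p : Pathway σ) :
    State σ × State σ × ℕ × State σ × Set (State σ × State σ) × Set (State σ) :=
  (minInit p, finalState p, width p, formalClosure fm p, DFS fm p, RFS fm p)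

/-- An annotated prime pathway: exactly its chosen turning point is annotated,
with the corresponding formal basis reaction. -/
def GoodAnnotation (fm : σ → Bool) (ap : List (Reaction σ × Option (Reaction σ))) : Prop :=
  PrimePathway fm (ap.map Prod.fst) ∧
  ∃ j, TurningAt fm (ap.map Prod.fst) j ∧
    ap.map Prod.snd = (List.range ap.length).map
      (fun i => if i = j then
          some (minInit (ap.map Prod.fst), finalState (ap.map Prod.fst)) else none)

/-- `p` can be interpreted as `q`: `q` can occur in the initial state of `p`, has
the same net effect, and there is a decomposition of `p` into prime formal pathways
such that replacing a chosen turning point of each by the corresponding formal basis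
element and removing all other reactions yields `q`. -/
def Interpreted (fm : σ → Bool) (p q : Pathway σ) : Prop :=
  minInit q ≤ minInit p ∧
  finalFrom (minInit p) q = finalState p ∧
  ∃ ap : List (Reaction σ × Option (Reaction σ)),
    ap.map Prod.fst = p ∧ (ap.map Prod.snd).reduceOption = q ∧
    ∃ aps, InterleaveMany aps ap ∧ ∀ a ∈ aps, GoodAnnotation fm a


/-! ### Auxiliary lemmas -/

section Aux

variable {fm : σ → Bool}

lemma formal_of_le {S T : State σ} (h : S ≤ T) (hT : FormalState fm T) :
    FormalState fm S := fun x hx => hT x (Multiset.mem_of_le h hx)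

lemma reactant_le {r : Reaction σ} {p : Pathway σ} {S : State σ}
    (h : minInit (r :: p) ≤ S) : r.1 ≤ S :=
  le_trans (le_add_right le_rfl) h

lemma minInit_tail_le {r : Reaction σ} {p : Pathway σ} {S : State σ}
    (h : minInit (r :: p) ≤ S) : minInit p ≤ applyRxn S r := by
  have h1 : minInit p - r.2 ≤ S - r.1 := by
    have := h
    simp only [minInit] at this
    exact le_tsub_of_add_le_left this
  calc minInit p ≤ minInit p - r.2 + r.2 := le_tsub_add
    _ ≤ S - r.1 + r.2 := add_le_add_left h1 _
    _ = applyRxn S r := rfl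

lemma finalFrom_add {p : Pathway σ} {S : State σ} (T : State σ) (h : minInit p ≤ S) :
    finalFrom (S + T) p = finalFrom S p + T := by
  induction p generalizing S with
  | nil => rfl
  | cons r p ih =>
    have hr : r.1 ≤ S := reactant_le h
    have : applyRxn (S + T) r = applyRxn S r + T := by
      simp only [applyRxn]
      rw [add_comm S T, add_tsub_assoc_of_le hr, add_comm T (S - r.1), add_right_comm]
    simp only [finalFrom, this]
    exact ih (minInit_tail_le h)

lemma finalFrom_append (S : State σ) (p q : Pathway σ) :
    finalFrom S (p ++ q) = finalFrom (finalFrom S p) q := by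
  induction p generalizing S with
  | nil => rfl
  | cons r p ih => simp [finalFrom, ih]

lemma minInit_take_le (p : Pathway σ) (i : ℕ) : minInit (p.take i) ≤ minInit p := by
  induction p generalizing i with
  | nil => simp
  | cons r p ih =>
    cases i with
    | zero => simp [minInit]
    | succ i =>
      simp only [List.take, minInit]
      exact add_le_add_right (tsub_le_tsub_right (ih i) _) _

lemma sub_add_eq_union (a b : Multiset σ) : a - b + b = a + (b - a) := by
  ext x
  simp only [Multiset.count_add, Multiset.count_sub]
  omega

lemma minInit_concat (p : Pathway σ) (r : Reaction σ) :
    minInit (p ++ [r]) = minInit p + (r.1 - finalState p) := by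
  induction p with
  | nil => simp [minInit, finalState, finalFrom, tsub_zero, zero_tsub]
  | cons s p ih =>
    have hfs : finalState (s :: p) = finalState p + (s.2 - minInit p) := by
      simp only [finalState, finalFrom, minInit]
      have : applyRxn (s.1 + (minInit p - s.2)) s = minInit p + (s.2 - minInit p) := by
        simp only [applyRxn]
        rw [add_tsub_cancel_left, sub_add_eq_union]
      rw [this, finalFrom_add _ le_rfl]
    show minInit (s :: (p ++ [r])) = _
    simp only [minInit, ih, hfs]
    ext x
    simp only [Multiset.count_add, Multiset.count_sub]
    omega

lemma Interleave.comm {q1 q2 p : Pathway σ} (h : Interleave q1 q2 p) :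
    Interleave q2 q1 p := by
  induction h with
  | nil => exact .nil
  | left h ih => exact .right ih
  | right h ih => exact .left ih

lemma Interleave.length_eq {α : Type u} {q1 q2 p : List α} (h : Interleave q1 q2 p) :
    p.length = q1.length + q2.length := by
  induction h with
  | nil => rfl
  | left h ih => simp [ih]; omega
  | right h ih => simp [ih]; omega

lemma Interleave.nil_left_aux {α : Type u} {q1 q2 p : List α} (h : Interleave q1 q2 p)
    (hq : q1 = []) : p = q2 := by
  induction h with
  | nil => rfl
  | left h ih => cases hq
  | right h ih => exact congrArg _ (ih hq)

lemma Interleave.nil_left {α : Type u} {q2 p : List α} (h : Interleave [] q2 p) :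
    p = q2 := h.nil_left_aux rfl

lemma Interleave.nil_left' {α : Type u} (l : List α) : Interleave [] l l := by
  induction l with
  | nil => exact .nil
  | cons a l ih => exact .right ih

lemma Interleave.mem_left {q1 q2 p : Pathway σ} (h : Interleave q1 q2 p) {a : Reaction σ}
    (ha : a ∈ q1) : a ∈ p := by
  induction h with
  | nil => exact absurd ha (by simp)
  | left h ih =>
    rcases List.mem_cons.1 ha with rfl | ha'
    · exact List.mem_cons_self
    · exact List.mem_cons_of_mem _ (ih ha')
  | right h ih => exact List.mem_cons_of_mem _ (ih ha)

lemma Interleave.assoc {a b q c p : Pathway σ} (hab : Interleave a b q)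
    (hqc : Interleave q c p) : ∃ d, Interleave b c d ∧ Interleave a d p := by
  induction hqc generalizing a b with
  | nil =>
    cases hab
    exact ⟨[], .nil, .nil⟩
  | @left x q' c' p' h ih =>
    cases hab with
    | left hab' =>
      obtain ⟨d, hd1, hd2⟩ := ih hab'
      exact ⟨d, hd1, .left hd2⟩
    | right hab' =>
      obtain ⟨d, hd1, hd2⟩ := ih hab'
      exact ⟨x :: d, .left hd1, .right hd2⟩
  | @right x q' c' p' h ih =>
    obtain ⟨d, hd1, hd2⟩ := ih hab
    exact ⟨x :: d, .right hd1, .right hd2⟩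

lemma Interleave.concat {a b p : Pathway σ} (h : Interleave a b p) (r : Reaction σ) :
    Interleave a (b ++ [r]) (p ++ [r]) := by
  induction h with
  | nil => exact .right .nil
  | left h ih => exact .left ih
  | right h ih => exact .right ih

lemma Interleave.take {q1 q2 p : Pathway σ} (h : Interleave q1 q2 p) (i : ℕ) :
    ∃ i1 i2, Interleave (q1.take i1) (q2.take i2) (p.take i) := by
  induction h generalizing i with
  | nil => exact ⟨0, 0, by simpa using Interleave.nil⟩
  | @left x l1 l2 l h ih =>
    cases i with
    | zero => exact ⟨0, 0, by simpa using Interleave.nil⟩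
    | succ i =>
      obtain ⟨i1, i2, hi⟩ := ih i
      exact ⟨i1 + 1, i2, by simpa using Interleave.left hi⟩
  | @right x l1 l2 l h ih =>
    cases i with
    | zero => exact ⟨0, 0, by simpa using Interleave.nil⟩
    | succ i =>
      obtain ⟨i1, i2, hi⟩ := ih i
      exact ⟨i1, i2 + 1, by simpa using Interleave.right hi⟩

lemma minInit_interleave_le {q1 q2 p : Pathway σ} (h : Interleave q1 q2 p) :
    minInit p ≤ minInit q1 + minInit q2 := by
  induction h with
  | nil => simp [minInit]
  | @left a l1 l2 l h ih =>
    show minInit (a :: l) ≤ minInit (a :: l1) + minInit l2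
    simp only [minInit, add_assoc]
    refine add_le_add_right ?_ _
    calc minInit l - a.2 ≤ (minInit l1 + minInit l2) - a.2 := tsub_le_tsub_right ih _
      _ ≤ (minInit l1 - a.2) + minInit l2 := by
          rw [tsub_le_iff_right, add_right_comm]
          exact add_le_add_left le_tsub_add _
  | @right a l1 l2 l h ih =>
    show minInit (a :: l) ≤ minInit l1 + minInit (a :: l2)
    simp only [minInit]
    rw [add_left_comm]
    refine add_le_add_right ?_ _
    calc minInit l - a.2 ≤ (minInit l1 + minInit l2) - a.2 := tsub_le_tsub_right ih _
      _ ≤ minInit l1 + (minInit l2 - a.2) := by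
          rw [tsub_le_iff_right, add_assoc]
          exact add_le_add_right le_tsub_add _

lemma finalFrom_interleave {q1 q2 p : Pathway σ} (h : Interleave q1 q2 p)
    {S1 S2 : State σ} (h1 : minInit q1 ≤ S1) (h2 : minInit q2 ≤ S2) :
    finalFrom (S1 + S2) p = finalFrom S1 q1 + finalFrom S2 q2 := by
  induction h generalizing S1 S2 with
  | nil => rfl
  | @left a l1 l2 l h ih =>
    have ha : a.1 ≤ S1 := reactant_le h1
    have : applyRxn (S1 + S2) a = applyRxn S1 a + S2 := by
      simp only [applyRxn]
      rw [add_comm S1 S2, add_tsub_assoc_of_le ha, add_comm S2 (S1 - a.1), add_right_comm]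
    show finalFrom (applyRxn (S1 + S2) a) l = finalFrom (applyRxn S1 a) l1 + finalFrom S2 l2
    rw [this]
    exact ih (minInit_tail_le h1) h2
  | @right a l1 l2 l h ih =>
    have ha : a.1 ≤ S2 := reactant_le h2
    have : applyRxn (S1 + S2) a = S1 + applyRxn S2 a := by
      simp only [applyRxn]
      rw [add_tsub_assoc_of_le ha, add_assoc]
    show finalFrom (applyRxn (S1 + S2) a) l = finalFrom S1 l1 + finalFrom (applyRxn S2 a) l2
    rw [this]
    exact ih h1 (minInit_tail_le h2)

lemma le_foldr_max {l : List ℕ} {x : ℕ} (h : x ∈ l) : x ≤ l.foldr max 0 := by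
  induction l with
  | nil => simp at h
  | cons a l ih =>
    rcases List.mem_cons.1 h with rfl | h'
    · exact le_max_left _ _
    · exact le_trans (ih h') (le_max_right _ _)

lemma foldr_max_le {l : List ℕ} {W : ℕ} (h : ∀ x ∈ l, x ≤ W) : l.foldr max 0 ≤ W := by
  induction l with
  | nil => simp
  | cons a l ih =>
    simp only [List.foldr, max_le_iff]
    exact ⟨h a (by simp), ih fun x hx => h x (by simp [hx])⟩

lemma stateAt_saturate {p : Pathway σ} {i : ℕ} (h : p.length ≤ i) :
    stateAt p i = stateAt p p.length := by
  simp only [stateAt, List.take_of_length_le h, List.take_of_length_le le_rfl]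

lemma card_stateAt_le_width (p : Pathway σ) (i : ℕ) :
    Multiset.card (stateAt p i) ≤ width p := by
  rcases le_or_gt i p.length with h | h
  · exact le_foldr_max (List.mem_map_of_mem (List.mem_range.2 (by omega)))
  · rw [stateAt_saturate h.le]
    exact le_foldr_max (List.mem_map_of_mem (List.mem_range.2 (by omega)))

lemma width_le_of {p : Pathway σ} {W : ℕ} (h : ∀ i, Multiset.card (stateAt p i) ≤ W) :
    width p ≤ W := by
  refine foldr_max_le ?_
  intro x hx
  obtain ⟨i, _, rfl⟩ := List.mem_map.1 hx
  exact h i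

lemma width_nil : width ([] : Pathway σ) = 0 := by
  simp [width, stateAt, minInit, finalFrom]

lemma width_interleave {q1 q2 p : Pathway σ} (h : Interleave q1 q2 p) :
    width p ≤ width q1 + width q2 := by
  refine width_le_of fun i => ?_
  obtain ⟨i1, i2, ht⟩ := h.take i
  have key : finalFrom (minInit q1 + minInit q2) (p.take i) = stateAt q1 i1 + stateAt q2 i2 :=
    finalFrom_interleave ht (minInit_take_le _ _) (minInit_take_le _ _)
  have hle : minInit p ≤ minInit q1 + minInit q2 := minInit_interleave_le h
  have hsum : minInit p + (minInit q1 + minInit q2 - minInit p) = minInit q1 + minInit q2 :=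
    add_tsub_cancel_of_le hle
  have key2 : finalFrom (minInit q1 + minInit q2) (p.take i)
      = stateAt p i + (minInit q1 + minInit q2 - minInit p) := by
    conv_lhs => rw [← hsum]
    exact finalFrom_add _ (minInit_take_le p i)
  calc Multiset.card (stateAt p i)
      ≤ Multiset.card (stateAt p i + (minInit q1 + minInit q2 - minInit p)) := by
        simp
    _ = Multiset.card (stateAt q1 i1 + stateAt q2 i2) := by rw [← key2, key]
    _ = Multiset.card (stateAt q1 i1) + Multiset.card (stateAt q2 i2) := by simp
    _ ≤ width q1 + width q2 :=
        add_le_add (card_stateAt_le_width _ _) (card_stateAt_le_width _ _)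

lemma IM.minInit_le {qs : List (Pathway σ)} {p : Pathway σ} (h : InterleaveMany qs p) :
    minInit p ≤ (qs.map minInit).sum := by
  induction h with
  | nil => simp [minInit]
  | @cons q r p qs hint hmany ih =>
    simp only [List.map_cons, List.sum_cons]
    exact le_trans (minInit_interleave_le hint) (add_le_add_right ih _)

lemma IM.finalFrom_sum {qs : List (Pathway σ)} {p : Pathway σ} (h : InterleaveMany qs p) :
    finalFrom ((qs.map minInit).sum) p = (qs.map finalState).sum := by
  induction h with
  | nil => simp [finalFrom]
  | @cons q r p qs hint hmany ih =>
    simp only [List.map_cons, List.sum_cons]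
    rw [finalFrom_interleave hint le_rfl (IM.minInit_le hmany), ih]
    rfl

lemma IM.width_le {qs : List (Pathway σ)} {p : Pathway σ} (h : InterleaveMany qs p) :
    width p ≤ (qs.map width).sum := by
  induction h with
  | nil => simp [width_nil]
  | @cons q r p qs hint hmany ih =>
    simp only [List.map_cons, List.sum_cons]
    exact le_trans (width_interleave hint) (add_le_add_right ih _)

lemma IM.mem {qs : List (Pathway σ)} {p q : Pathway σ} (h : InterleaveMany qs p)
    (hq : q ∈ qs) {a : Reaction σ} (ha : a ∈ q) : a ∈ p := by
  induction h with
  | nil => simp at hq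
  | @cons q' r p qs hint hmany ih =>
    rcases List.mem_cons.1 hq with rfl | hq'
    · exact hint.mem_left ha
    · exact hint.comm.mem_left (ih hq')

lemma IM.length_le {qs : List (Pathway σ)} {p q : Pathway σ} (h : InterleaveMany qs p)
    (hq : q ∈ qs) : q.length ≤ p.length := by
  induction h with
  | nil => simp at hq
  | @cons q' r p qs hint hmany ih =>
    have := hint.length_eq
    rcases List.mem_cons.1 hq with rfl | hq'
    · omega
    · have := ih hq'; omega

lemma IM.append {qs1 qs2 : List (Pathway σ)} {q1 q2 p : Pathway σ}
    (h1 : InterleaveMany qs1 q1) (h2 : InterleaveMany qs2 q2)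
    (hint : Interleave q1 q2 p) : InterleaveMany (qs1 ++ qs2) p := by
  induction h1 generalizing p with
  | nil =>
    rw [hint.nil_left]
    exact h2
  | @cons a r1 q1' qs1' hair hmany ih =>
    obtain ⟨c, hc1, hc2⟩ := Interleave.assoc hair hint
    exact .cons hc2 (ih hc1)

lemma IM.eraseIdx {qs : List (Pathway σ)} {p : Pathway σ} (h : InterleaveMany qs p) :
    ∀ i (hi : i < qs.length), ∃ rest, Interleave (qs.get ⟨i, hi⟩) rest p ∧
      InterleaveMany (qs.eraseIdx i) rest := by
  induction h with
  | nil => intro i hi; simp at hi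
  | @cons q r p qs hint hmany ih =>
    intro i hi
    cases i with
    | zero => exact ⟨r, hint, hmany⟩
    | succ i =>
      have hi' : i < qs.length := by simpa using hi
      obtain ⟨rest', hint', hmany'⟩ := ih i hi'
      obtain ⟨d, hd1, hd2⟩ := Interleave.assoc hint' hint.comm
      refine ⟨d, hd2, ?_⟩
      exact .cons hd1.comm hmany'

lemma IM.sum_finalState {qs : List (Pathway σ)} {p : Pathway σ} (h : InterleaveMany qs p) :
    (qs.map finalState).sum = finalState p + ((qs.map minInit).sum - minInit p) := by
  rw [← IM.finalFrom_sum h]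
  conv_lhs => rw [← add_tsub_cancel_of_le (IM.minInit_le h)]
  exact finalFrom_add _ le_rfl

lemma formal_minInit_sum {l : List (Pathway σ)} (h : ∀ q ∈ l, Semiformal fm q) :
    FormalState fm ((l.map minInit).sum) := by
  induction l with
  | nil => intro x hx; simp at hx
  | cons a l ih =>
    intro x hx
    simp only [List.map_cons, List.sum_cons] at hx
    rcases Multiset.mem_add.1 hx with hx' | hx'
    · exact h a (by simp) x hx'
    · exact ih (fun q hq => h q (by simp [hq])) x hx'

lemma exists_decomp (fm : σ → Bool) :
    ∀ n (p : Pathway σ), p.length ≤ n → Semiformal fm p →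
      ∃ qs, InterleaveMany qs p ∧
        ∀ q ∈ qs, q ≠ [] ∧ Semiformal fm q ∧ ¬ SDecomposable fm q := by
  intro n
  induction n with
  | zero =>
    intro p hl _
    have : p = [] := List.eq_nil_of_length_eq_zero (Nat.le_zero.1 hl)
    subst this
    exact ⟨[], .nil, by simp⟩
  | succ n ih =>
    intro p hl hs
    by_cases hd : SDecomposable fm p
    · obtain ⟨q1, q2, h1, h2, hint, hs1, hs2⟩ := hd
      have hlen := hint.length_eq
      have hl1 : q1.length ≤ n := by
        have : 1 ≤ q2.length := List.length_pos_iff.2 h2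
        omega
      have hl2 : q2.length ≤ n := by
        have : 1 ≤ q1.length := List.length_pos_iff.2 h1
        omega
      obtain ⟨qs1, hm1, hc1⟩ := ih q1 hl1 hs1
      obtain ⟨qs2, hm2, hc2⟩ := ih q2 hl2 hs2
      refine ⟨qs1 ++ qs2, IM.append hm1 hm2 hint, ?_⟩
      intro q hq
      rcases List.mem_append.1 hq with hq' | hq'
      · exact hc1 q hq'
      · exact hc2 q hq'
    · rcases eq_or_ne p [] with rfl | hne
      · exact ⟨[], .nil, by simp⟩
      · exact ⟨[p], .cons (Interleave.nil_left' p).comm .nil,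
          by simpa using ⟨hne, hs, hd⟩⟩

lemma sum_map_eraseIdx {α : Type u} {M : Type v} [AddCommMonoid M] (g : α → M) :
    ∀ (l : List α) i (h : i < l.length),
      ((l.eraseIdx i).map g).sum + g (l.get ⟨i, h⟩) = (l.map g).sum := by
  intro l
  induction l with
  | nil => intro i h; simp at h
  | cons a l ih =>
    intro i h
    cases i with
    | zero => simp [List.eraseIdx, add_comm]
    | succ i =>
      have h' : i < l.length := by simpa using h
      simp only [List.eraseIdx, List.map_cons, List.sum_cons, List.get]
      rw [add_assoc, ih i h']

lemma count_list_sum (x : σ) (L : List (Multiset σ)) :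
    Multiset.count x L.sum = (L.map (Multiset.count x)).sum := by
  induction L with
  | nil => simp
  | cons a L ih => simp [Multiset.count_add, ih]

lemma list_sum_map_eq_fin {α : Type u} {M : Type v} [AddCommMonoid M] (g : α → M)
    (l : List α) : (l.map g).sum = ∑ j : Fin l.length, g (l.get j) := by
  conv_lhs => rw [← List.ofFn_get l]
  rw [List.map_ofFn, List.sum_ofFn]
  rfl

lemma count_bound {k : ℕ} (f : Fin k → ℕ) (n cF : ℕ) (T : Finset (Fin k))
    (hsum : ∑ j, f j = cF) (hnF : n ≤ cF) (hT : ∀ i ∈ T, cF + 1 ≤ f i + n) :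
    T.card ≤ n := by
  have h1 : ∑ i ∈ T, f i ≤ cF :=
    hsum ▸ Finset.sum_le_sum_of_subset (Finset.subset_univ T)
  have h2 : T.card * (cF + 1) ≤ ∑ i ∈ T, (f i + n) := by
    simpa [smul_eq_mul] using Finset.card_nsmul_le_sum T _ _ hT
  rw [Finset.sum_add_distrib, Finset.sum_const, smul_eq_mul] at h2
  set t := T.card
  by_contra hcon
  push_neg at hcon
  obtain ⟨d, rfl⟩ : ∃ d, cF = n + d := ⟨cF - n, by omega⟩
  have e1 : t * (n + d + 1) ≤ (∑ i ∈ T, f i) + t * n := h2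
  have e2 : t * d + t ≤ n + d := by
    have : t * (n + d + 1) = t * n + (t * d + t) := by ring
    omega
  have e3 : (n + 1) * d + (n + 1) ≤ t * d + t :=
    add_le_add (Nat.mul_le_mul_right d hcon) hcon
  have : (n + 1) * d = n * d + d := by ring
  omega

end Aux

/-- If `(w+1)·b ≤ w_max` and there is no undecomposable semiformal pathway of width
in `(w, w_max]`, then there is none of width `> w` at all. -/
theorem no_large_width_undecomposable {σ : Type} [DecidableEq σ] (fm : σ → Bool)
    (C : Finset (Reaction σ)) (hC : NontrivialRxns C) (w wmax : ℕ)
    (hb : (w + 1) * branching C ≤ wmax)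
    (hno : ∀ p : Pathway σ, PathwayOf C p → Semiformal fm p → ¬ SDecomposable fm p →
      w < width p → width p ≤ wmax → False) :
    ∀ p : Pathway σ, PathwayOf C p → Semiformal fm p → ¬ SDecomposable fm p →
      width p ≤ w := by
  have main : ∀ n (p : Pathway σ), p.length ≤ n → PathwayOf C p → Semiformal fm p →
      ¬ SDecomposable fm p → width p ≤ w := by
    intro n
    induction n with
    | zero =>
      intro p hl _ _ _
      have : p = [] := List.eq_nil_of_length_eq_zero (Nat.le_zero.1 hl)
      subst this
      simp [width_nil]
    | succ n ih =>
      intro p hl hp hs hd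
      by_contra hwc
      push_neg at hwc
      rcases List.eq_nil_or_concat p with rfl | ⟨p', r, rfl⟩
      · rw [width_nil] at hwc; omega
      · simp only [List.concat_eq_append] at hl hp hs hd hwc
        set b := branching C with hbdef
        have hr : r ∈ C := hp r (by simp)
        have hcard1 : Multiset.card r.1 ≤ b :=
          le_trans (le_max_left _ _) (Finset.le_sup (f := fun r => max (Multiset.card r.1) (Multiset.card r.2)) hr)
        have hcard2 : Multiset.card r.2 ≤ b :=
          le_trans (le_max_right _ _) (Finset.le_sup (f := fun r => max (Multiset.card r.1) (Multiset.card r.2)) hr)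
        have hmi : minInit (p' ++ [r]) = minInit p' + (r.1 - finalState p') :=
          minInit_concat p' r
        have hsf' : Semiformal fm p' :=
          formal_of_le (by rw [hmi]; exact le_add_right le_rfl) hs
        obtain ⟨qs, him, hcomp⟩ := exists_decomp fm p'.length p' le_rfl hsf'
        have hplen : p'.length + 1 ≤ n + 1 := by simpa using hl
        -- every component has width ≤ w by induction hypothesis
        have hwq : ∀ q ∈ qs, width q ≤ w := by
          intro q hq
          refine ih q ?_ ?_ (hcomp q hq).2.1 (hcomp q hq).2.2
          · have := IM.length_le him hq; omega
          · intro a ha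
            exact hp a (List.mem_append_left _ (IM.mem him hq ha))
        -- key step: each component must feed an intermediate species to r
        have key : ∀ i : Fin qs.length, ∃ x : σ, fm x = false ∧
            Multiset.count x (((qs.eraseIdx i).map finalState).sum) < Multiset.count x r.1 := by
          rintro ⟨i, hi⟩
          obtain ⟨rest, hint, hrest⟩ := IM.eraseIdx him i hi
          have hq := hcomp _ (List.get_mem qs ⟨i, hi⟩)
          have hrform : FormalState fm (((qs.eraseIdx i).map minInit).sum) :=
            formal_minInit_sum fun q hq' =>
              (hcomp q ((List.eraseIdx_sublist qs i).subset hq')).2.1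
          have hrest_sf : Semiformal fm rest := formal_of_le (IM.minInit_le hrest) hrform
          have hnot : ¬ Semiformal fm (rest ++ [r]) := by
            intro hsf2
            exact hd ⟨_, rest ++ [r], hq.1, by simp, hint.concat r, hq.2.1, hsf2⟩
          rw [Semiformal, minInit_concat] at hnot
          have hex : ∃ x ∈ r.1 - finalState rest, fm x = false := by
            by_contra hcon
            push_neg at hcon
            apply hnot
            intro x hx
            rcases Multiset.mem_add.1 hx with h' | h'
            · exact hrest_sf x h'
            · have := hcon x h'
              revert this
              cases fm x <;> simp
          obtain ⟨x, hxm, hxf⟩ := hex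
          have hcnt : Multiset.count x (finalState rest) < Multiset.count x r.1 := by
            have := Multiset.count_pos.2 hxm
            rw [Multiset.count_sub] at this
            omega
          have hsumeq := IM.sum_finalState hrest
          have hslack :
              Multiset.count x ((((qs.eraseIdx i)).map minInit).sum - minInit rest) = 0 := by
            rw [Multiset.count_eq_zero]
            intro hmem
            have := hrform x (Multiset.mem_of_le tsub_le_self hmem)
            rw [hxf] at this
            cases this
          refine ⟨x, hxf, ?_⟩
          rw [hsumeq, Multiset.count_add, hslack]
          omega
        -- deduce: number of components ≤ b
        choose xx hxf hxlt using key
        have hmaps : Multiset.map xx Finset.univ.val ≤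
            Multiset.filter (fun y => fm y = false) r.1 := by
          rw [Multiset.le_iff_count]
          intro y
          by_cases hy : ∃ i, xx i = y
          · obtain ⟨i0, rfl⟩ := hy
            rw [Multiset.count_filter, if_pos (hxf i0)]
            classical
            set T := Finset.univ.filter (fun i => xx i = xx i0) with hT
            have hcm : Multiset.count (xx i0) (Multiset.map xx Finset.univ.val) = T.card := by
              rw [Multiset.count_map,
                Multiset.filter_congr (fun x _ => (eq_comm : xx i0 = xx x ↔ _)),
                hT, Finset.card_def, Finset.filter_val]
            rw [hcm]
            -- set up counting lemma
            set f : Fin qs.length → ℕ :=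
              fun j => Multiset.count (xx i0) (finalState (qs.get j)) with hf
            set cF : ℕ := Multiset.count (xx i0) ((qs.map finalState).sum) with hcF
            have hsumf : ∑ j, f j = cF := by
              rw [hcF, count_list_sum, List.map_map, list_sum_map_eq_fin]
              rfl
            have hnF : Multiset.count (xx i0) r.1 ≤ cF := by
              -- from semiformality of p
              have h0 : Multiset.count (xx i0) (minInit (p' ++ [r])) = 0 := by
                rw [Multiset.count_eq_zero]
                intro hmem
                have := hs _ hmem
                rw [hxf i0] at this
                cases this
              rw [hmi, Multiset.count_add, Multiset.count_sub] at h0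
              have h1 : Multiset.count (xx i0) r.1 ≤ Multiset.count (xx i0) (finalState p') := by
                omega
              have h2 := IM.sum_finalState him
              rw [hcF, h2, Multiset.count_add]
              omega
            have hTbound : ∀ i ∈ T, cF + 1 ≤ f i + Multiset.count (xx i0) r.1 := by
              intro i hiT
              have hieq : xx i = xx i0 := by
                rw [hT] at hiT
                simpa using hiT
              have hlt := hxlt i
              rw [hieq] at hlt
              have herase := sum_map_eraseIdx finalState qs i.1 i.2
              have := congrArg (Multiset.count (xx i0)) herase
              rw [Multiset.count_add] at this
              have : Multiset.count (xx i0) (((qs.eraseIdx i.1).map finalState).sum) + f i = cF := by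
                rw [hf, hcF]; exact this
              omega
            exact count_bound f _ cF T hsumf hnF hTbound
          · have : Multiset.count y (Multiset.map xx Finset.univ.val) = 0 := by
              rw [Multiset.count_eq_zero]
              intro hmem
              obtain ⟨i, _, hi⟩ := Multiset.mem_map.1 hmem
              exact hy ⟨i, hi⟩
            rw [this]
            exact Nat.zero_le _
        have hkb : qs.length ≤ b := by
          have hcards := Multiset.card_le_card hmaps
          simp only [Multiset.card_map] at hcards
          have : (Finset.univ : Finset (Fin qs.length)).val.card = qs.length := by
            simp
          rw [this] at hcards
          exact le_trans hcards (le_trans (Multiset.card_le_card (Multiset.filter_le _ _)) hcard1)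
        -- width bounds
        have hw1 : width p' ≤ qs.length * w := by
          refine le_trans (IM.width_le him) ?_
          have := List.sum_le_card_nsmul (qs.map width) w ?_
          · simpa [smul_eq_mul] using this
          · intro x hx
            obtain ⟨q, hq, rfl⟩ := List.mem_map.1 hx
            exact hwq q hq
        have hw2 : width (p' ++ [r]) ≤ width p' + b := by
          refine width_le_of fun i => ?_
          rcases le_or_gt i p'.length with hi | hi
          · have htake : (p' ++ [r]).take i = p'.take i :=
              List.take_append_of_le_length hi
            have hst : stateAt (p' ++ [r]) i = stateAt p' i + (r.1 - finalState p') := by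
              rw [stateAt, htake, hmi]
              exact finalFrom_add _ (minInit_take_le p' i)
            rw [hst]
            simp only [Multiset.card_add]
            have hδ : Multiset.card (r.1 - finalState p') ≤ Multiset.card r.1 :=
              Multiset.card_le_card tsub_le_self
            have := card_stateAt_le_width p' i
            omega
          · have hlen2 : (p' ++ [r]).length ≤ i := by simp; omega
            rw [stateAt_saturate hlen2]
            have hst : stateAt (p' ++ [r]) (p' ++ [r]).length =
                applyRxn (finalState p' + (r.1 - finalState p')) r := by
              rw [stateAt, List.take_of_length_le le_rfl, finalFrom_append, hmi,
                finalFrom_add _ le_rfl]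
              rfl
            have hr1le : r.1 ≤ finalState p' + (r.1 - finalState p') := by
              rw [add_comm]
              exact le_tsub_add
            rw [hst]
            have hcardsub : Multiset.card (finalState p' + (r.1 - finalState p') - r.1)
                + Multiset.card r.1
                = Multiset.card (finalState p') + Multiset.card (r.1 - finalState p') := by
              rw [← Multiset.card_add, tsub_add_cancel_of_le hr1le, Multiset.card_add]
            have hδ : Multiset.card (r.1 - finalState p') ≤ Multiset.card r.1 :=
              Multiset.card_le_card tsub_le_self
            have hfp' : Multiset.card (finalState p') ≤ width p' := by
              have := card_stateAt_le_width p' p'.length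
              rwa [stateAt, List.take_of_length_le le_rfl] at this
            simp only [applyRxn, Multiset.card_add]
            omega
        -- put it together
        have hfinal : width (p' ++ [r]) ≤ wmax := by
          calc width (p' ++ [r]) ≤ width p' + b := hw2
            _ ≤ qs.length * w + b := by omega
            _ ≤ b * w + b := by
                have := Nat.mul_le_mul_right w hkb
                omega
            _ = (w + 1) * b := by ring
            _ ≤ wmax := hb
        exact hno _ hp hs hd hwc hfinal
  intro p hp hs hd
  exact main p.length p le_rfl hp hs hd

end CRNVerif
end

section
/- A prime formal pathway is regular if and only if its RFS contains its final state. -/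
namespace CRNVerif

variable {σ : Type} [DecidableEq σ]

lemma foldr_union_le {l : List (Multiset σ)} {T : Multiset σ}
    (h : ∀ a ∈ l, a ≤ T) : l.foldr (· ∪ ·) 0 ≤ T := by
  induction l with
  | nil => simp
  | cons a l ih =>
    simp only [List.foldr_cons]
    exact sup_le (h a List.mem_cons_self)
      (ih fun b hb => h b (List.mem_cons_of_mem _ hb))

lemma le_foldr_union {l : List (Multiset σ)} {a : Multiset σ}
    (h : a ∈ l) : a ≤ l.foldr (· ∪ ·) 0 := by
  induction l with
  | nil => simp at h
  | cons b l ih =>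
    rcases List.mem_cons.1 h with rfl | h
    · exact le_sup_left
    · exact le_trans (ih h) le_sup_right

lemma stateAt_length (p : Pathway σ) : stateAt p p.length = finalState p := by
  simp [stateAt, finalState, List.take_length]

/-- A prime formal pathway is regular iff its RFS contains its final state. -/
theorem prime_regular_iff_final_mem_rfs {σ : Type} [DecidableEq σ] (fm : σ → Bool)
    (p : Pathway σ) (hp : PrimePathway fm p) :
    RegularPathway fm p ↔ finalState p ∈ RFS fm p := by
  have hfin : formalPart fm (finalState p) = finalState p := by
    exact Multiset.filter_eq_self.2 (fun x hx => by
      simpa using hp.1.2.2 x hx)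
  constructor
  · rintro ⟨hfp, j, hj, hbefore, hafter, hzero⟩
    refine ⟨j, hj, hbefore, hzero, ?_⟩
    apply le_antisymm
    · -- finalState ≤ rfsAt
      rw [← hfin, ← stateAt_length]
      apply le_foldr_union
      refine List.mem_map.2 ⟨p.length, ?_, rfl⟩
      refine List.mem_filter.2 ⟨List.mem_range.2 (Nat.lt_succ_self _), ?_⟩
      simpa using hj
    · apply foldr_union_le
      intro a ha
      rcases List.mem_map.1 ha with ⟨i, hi, rfl⟩
      rcases List.mem_filter.1 hi with ⟨hir, hji⟩
      exact hafter i (by simpa using hji)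
        (Nat.lt_succ_iff.1 (List.mem_range.1 hir))
  · rintro ⟨j, hj, hbefore, hzero, heq⟩
    refine ⟨hp.1, j, hj, hbefore, ?_, hzero⟩
    intro i hji hil
    rw [heq]
    apply le_foldr_union
    refine List.mem_map.2 ⟨i, ?_, rfl⟩
    refine List.mem_filter.2 ⟨List.mem_range.2 (Nat.lt_succ_of_le hil), ?_⟩
    simpa using hji

end CRNVerif
end
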